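/- Let U be a subset of the variables of a polynomial ring K[Y] and I an ideal with I ∩ K[U] = {0} (an independent set modulo I). Then |U| is at most the Krull dimension of K[Y]/I. Equivalently, if |U| exceeds dim(K[Y]/I), then I ∩ K[U] ≠ {0}. -/

import Mathlib

set_option maxHeartbeats 1000000
set_option synthInstance.maxHeartbeats 200000

open MvPolynomial

universe u

/-- Key induction: if a finitely generated algebra domain `D` over a field `L` contains
`n` algebraically independent elements, then `Spec D` has a chain of primes of length `n`. -/
lemma exists_ltSeries_of_algebraicIndependent (n : ℕ) :
    ∀ (L D : Type u) [Field L] [CommRing D] [IsDomain D] [Algebra L D]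
      [Algebra.FiniteType L D] (v : Fin n → D), AlgebraicIndependent L v →
      ∃ c : LTSeries (PrimeSpectrum D), c.length = n := by
  induction n with
  | zero =>
    intro L D _ _ _ _ _ v _
    exact ⟨RelSeries.singleton _ ⟨⊥, Ideal.bot_prime⟩, rfl⟩
  | succ n ih =>
    intro L D _ _ _ _ _ v hv
    classical
    set v' : Fin n → D := v ∘ Fin.succ with hv'def
    have hv' : AlgebraicIndependent L v' := hv.comp Fin.succ (Fin.succ_injective n)
    set R : Subalgebra L D := Algebra.adjoin L (Set.range v') with hR
    -- `v 0` is transcendental over `R`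
    have heq : (fun o : Option (Fin n) => o.elim (v 0) v') ∘ (finSuccEquiv n) = v := by
      funext j
      induction j using Fin.cases with
      | zero => simp
      | succ i => simp [hv'def]
    have hopt : AlgebraicIndependent L (fun o : Option (Fin n) => o.elim (v 0) v') :=
      (algebraicIndependent_equiv' (finSuccEquiv n) heq).mp hv
    have htr : Transcendental R (v 0) := (hv'.option_iff_transcendental (v 0)).mp hopt
    -- the multiplicative set of nonzero elements of `R`
    let S : Submonoid D :=
      { carrier := {x | x ∈ R ∧ x ≠ 0}
        one_mem' := ⟨R.one_mem, one_ne_zero⟩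
        mul_mem' := fun ha hb => ⟨R.mul_mem ha.1 hb.1, mul_ne_zero ha.2 hb.2⟩ }
    have hSle : S ≤ nonZeroDivisors D := fun x hx => mem_nonZeroDivisors_of_ne_zero hx.2
    let T := Localization S
    haveI : IsDomain T := IsLocalization.isDomain_localization hSle
    set φ : D →+* T := algebraMap D T with hφdef
    have hφ : Function.Injective φ := IsLocalization.injective T hSle
    let L' := FractionRing R
    set g : R →+* T := φ.comp (algebraMap R D) with hgdef
    have hg : ∀ y : nonZeroDivisors R, IsUnit (g y) := by
      rintro ⟨y, hy⟩
      have hy0 : y ≠ 0 := nonZeroDivisors.ne_zero hy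
      have hymem : (y : D) ∈ S := ⟨y.2, by simpa using hy0⟩
      have : g y = φ (y : D) := by
        simp [hgdef, Subalgebra.algebraMap_eq]
      rw [this]
      exact IsLocalization.map_units T (⟨(y : D), hymem⟩ : S)
    set f : L' →+* T := IsLocalization.lift (M := nonZeroDivisors R) hg with hfdef
    letI : Algebra L' T := f.toAlgebra
    have hfg : ∀ r : R, f (algebraMap R L' r) = φ (r : D) := by
      intro r
      rw [hfdef, IsLocalization.lift_eq, hgdef]
      simp [Subalgebra.algebraMap_eq]
    -- `T` is a finitely generated `L'`-algebra
    haveI : Algebra.FiniteType L' T := by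
      obtain ⟨s, hs⟩ := (inferInstance : Algebra.FiniteType L D).out
      refine ⟨⟨s.image φ, ?_⟩⟩
      rw [Finset.coe_image, eq_top_iff]
      have hRmem : ∀ r : R, φ (r : D) ∈ Algebra.adjoin L' (φ '' ↑s) := fun r => by
        rw [← hfg r]; exact Subalgebra.algebraMap_mem _ _
      have hD : ∀ d : D, φ d ∈ Algebra.adjoin L' (φ '' ↑s) := by
        intro d
        have hd : d ∈ Algebra.adjoin L (↑s : Set D) := hs ▸ Algebra.mem_top
        induction hd using Algebra.adjoin_induction with
        | mem y hy => exact Algebra.subset_adjoin ⟨y, hy, rfl⟩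
        | algebraMap c => exact hRmem ⟨algebraMap L D c, R.algebraMap_mem c⟩
        | add a b _ _ ha hb => rw [map_add]; exact add_mem ha hb
        | mul a b _ _ ha hb => rw [map_mul]; exact mul_mem ha hb
      rintro x -
      obtain ⟨⟨d, t⟩, hdt : IsLocalization.mk' T d t = x⟩ := IsLocalization.mk'_surjective S x
      have hspec : x * φ t = φ d := by
        rw [← hdt]; exact IsLocalization.mk'_spec T d t
      set r : R := ⟨(t : D), t.2.1⟩ with hrdef
      have hr0 : (algebraMap R L' r) ≠ 0 := by
        intro h
        have hr : r = 0 := IsFractionRing.injective R L' (by rw [h, map_zero])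
        exact t.2.2 (congrArg Subtype.val hr)
      have hunit : f (algebraMap R L' r)⁻¹ * φ t = 1 := by
        have : f (algebraMap R L' r)⁻¹ * f (algebraMap R L' r) = 1 := by
          rw [← map_mul, inv_mul_cancel₀ hr0, map_one]
        rw [← this]
        congr 1
        exact (hfg r).symm
      have hx : x = φ d * f (algebraMap R L' r)⁻¹ := by
        calc x = x * (f (algebraMap R L' r)⁻¹ * φ t) := by rw [hunit, mul_one]
        _ = (x * φ t) * f (algebraMap R L' r)⁻¹ := by ring
        _ = φ d * f (algebraMap R L' r)⁻¹ := by rw [hspec]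
      rw [hx]
      exact mul_mem (hD d) (Subalgebra.algebraMap_mem _ _)
    -- `φ (v 0)` is transcendental over `L'`
    have hw : Transcendental L' (φ (v 0)) := by
      rw [transcendental_iff]
      intro p hp
      by_contra hp0
      set q := IsLocalization.integerNormalization (nonZeroDivisors R) p with hq
      have hq0 : q ≠ 0 := fun h =>
        hp0 ((IsFractionRing.integerNormalization_eq_zero_iff (A := R) (K := L')).mp h)
      have h2 := IsLocalization.integerNormalization_eval₂_eq_zero
        (R := R) (M := nonZeroDivisors R) (algebraMap L' T) p
        (x := φ (v 0)) (by rwa [Polynomial.aeval_def] at hp)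
      have hcomp : (algebraMap L' T).comp (algebraMap R L') = g := by
        ext r
        exact hfg r
      rw [hcomp, hgdef, ← Polynomial.hom_eval₂] at h2
      have h3 : Polynomial.eval₂ (algebraMap R D) (v 0) q = 0 := by
        apply hφ
        rw [h2, map_zero]
      exact hq0 (transcendental_iff.mp htr q (by rwa [Polynomial.aeval_def]))
    -- `T` is not a field, by Zariski's lemma
    have hnf : ¬ IsField T := by
      intro hfield
      letI : Field T := hfield.toField
      haveI : IsJacobsonRing L' := inferInstance
      haveI : Module.Finite L' T := finite_of_finite_type_of_isJacobsonRing L' T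
      haveI : Algebra.IsIntegral L' T := Algebra.IsIntegral.of_finite L' T
      have hint : IsIntegral L' (φ (v 0)) := Algebra.IsIntegral.isIntegral _
      exact hw hint.isAlgebraic
    -- find a nonzero maximal ideal of `T` and pull it back
    obtain ⟨J, hJbot, hJtop⟩ := (Ring.not_isField_iff_exists_ideal_bot_lt_and_lt_top).mp hnf
    obtain ⟨M, hM, hJM⟩ := Ideal.exists_le_maximal J hJtop.ne
    have hMbot : M ≠ ⊥ := fun h => absurd (le_antisymm (h ▸ hJM) bot_le) hJbot.ne'
    haveI : M.IsPrime := hM.isPrime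
    set Q : Ideal D := M.comap φ with hQdef
    haveI : Q.IsPrime := Ideal.IsPrime.comap φ
    have hQS : ∀ x ∈ Q, x ∈ S → False := fun x hxQ hxS =>
      hM.ne_top (M.eq_top_of_isUnit_mem hxQ (IsLocalization.map_units T (⟨x, hxS⟩ : S)))
    have hQbot : Q ≠ ⊥ := by
      obtain ⟨y, hy0⟩ := Submodule.nonzero_mem_of_bot_lt (bot_lt_iff_ne_bot.mpr hMbot)
      obtain ⟨⟨d, t⟩, hdt : IsLocalization.mk' T d t = (y : T)⟩ := IsLocalization.mk'_surjective S (y : T)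
      intro h
      have hdQ : d ∈ Q := by
        show φ d ∈ M
        rw [← IsLocalization.mk'_spec T d t, hdt]
        exact M.mul_mem_right _ y.2
      rw [h, Ideal.mem_bot] at hdQ
      apply hy0
      have : (y : T) = 0 := by
        rw [← hdt, hdQ, IsLocalization.mk'_zero]
      exact Subtype.ext this
    -- algebraic independence of `v'` in `D ⧸ Q`
    haveI : Algebra.FiniteType L (D ⧸ Q) :=
      (inferInstance : Algebra.FiniteType L D).of_surjective
        (Ideal.Quotient.mkₐ L Q) Ideal.Quotient.mk_surjective
    have hvQ : AlgebraicIndependent L (fun i => Ideal.Quotient.mk Q (v' i)) := by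
      rw [algebraicIndependent_iff]
      intro p hp
      have h1 : aeval v' p ∈ Q := by
        rw [← Ideal.Quotient.eq_zero_iff_mem]
        have := comp_aeval_apply (Ideal.Quotient.mkₐ L Q) p (f := v')
        rw [show Ideal.Quotient.mk Q (aeval v' p) = Ideal.Quotient.mkₐ L Q (aeval v' p) from rfl, this]; exact hp
      have h2 : aeval v' p ∈ R := by
        rw [hR, Algebra.adjoin_range_eq_range_aeval]
        exact ⟨p, rfl⟩
      have h3 : aeval v' p = 0 := by
        by_contra h
        exact hQS _ h1 ⟨h2, h⟩
      exact algebraicIndependent_iff.mp hv' p h3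
    obtain ⟨c, hc⟩ := ih L (D ⧸ Q) (fun i => Ideal.Quotient.mk Q (v' i)) hvQ
    -- lift the chain and prepend the zero ideal
    let gmap : PrimeSpectrum (D ⧸ Q) → PrimeSpectrum D :=
      fun p => ⟨p.asIdeal.comap (Ideal.Quotient.mk Q), Ideal.IsPrime.comap _⟩
    have hgm : StrictMono gmap := by
      intro p q hpq
      refine lt_of_le_of_ne (Ideal.comap_mono hpq.le) ?_
      intro h
      have := Ideal.comap_injective_of_surjective (Ideal.Quotient.mk Q)
        Ideal.Quotient.mk_surjective (congrArg PrimeSpectrum.asIdeal h)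
      exact hpq.ne (PrimeSpectrum.ext this)
    have hhead : (⟨⊥, Ideal.bot_prime⟩ : PrimeSpectrum D) < gmap c.head := by
      refine lt_of_le_of_ne bot_le ?_
      intro h
      apply hQbot
      have hQle : Q ≤ (gmap c.head).asIdeal := by
        intro x hx
        have hx0 : Ideal.Quotient.mk Q x ∈ (c.head).asIdeal := by
          rw [Ideal.Quotient.eq_zero_iff_mem.mpr hx]
          exact zero_mem _
        exact hx0
      rw [← h] at hQle
      exact le_antisymm hQle bot_le
    refine ⟨(c.map gmap hgm).cons ⟨⊥, Ideal.bot_prime⟩ (by simpa using hhead), ?_⟩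
    simp [hc]

/-- If `U` is an independent set of variables modulo the ideal `I` of `K[Y]`
(i.e. `I ∩ K[U] = {0}`), then `|U|` is at most the Krull dimension of
`K[Y]/I`. -/
theorem independent_set_le_krullDim (K : Type*) [Field K] (m : ℕ)
    (I : Ideal (MvPolynomial (Fin m) K)) (U : Finset (Fin m))
    (hU : ∀ f : MvPolynomial {y : Fin m // y ∈ U} K,
      rename (Subtype.val : {y : Fin m // y ∈ U} → Fin m) f ∈ I → f = 0) :
    ((U.card : ℕ∞) : WithBot ℕ∞) ≤
      ringKrullDim (MvPolynomial (Fin m) K ⧸ I) := by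
  classical
  set n := U.card with hn
  -- the multiplicative set of nonzero polynomials supported on `U`
  let S : Submonoid (MvPolynomial (Fin m) K) :=
    { carrier := {x | x ∈ supported K (↑U : Set (Fin m)) ∧ x ≠ 0}
      one_mem' := ⟨one_mem _, one_ne_zero⟩
      mul_mem' := fun ha hb => ⟨mul_mem ha.1 hb.1, mul_ne_zero ha.2 hb.2⟩ }
  have hdisj : Disjoint (I : Set (MvPolynomial (Fin m) K)) (S : Set (MvPolynomial (Fin m) K)) := by
    rw [Set.disjoint_left]
    rintro g hgI ⟨hgsup, hg0⟩
    rw [supported_eq_range_rename] at hgsup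
    obtain ⟨p, hp⟩ := hgsup
    have hp' : rename (Subtype.val : {x : Fin m // x ∈ (↑U : Set (Fin m))} → Fin m) p = g := hp
    apply hg0
    rw [← hp', hU p (hp'.symm ▸ hgI), map_zero]
  obtain ⟨P, hPprime, hIP, hPdisj⟩ := Ideal.exists_le_prime_disjoint I S hdisj
  haveI := hPprime
  set D := MvPolynomial (Fin m) K ⧸ P with hD
  let e := U.orderIsoOfFin hn.symm
  set v : Fin n → D := fun i => Ideal.Quotient.mk P (X ((e i : {x // x ∈ U}) : Fin m)) with hvdef
  have hv : AlgebraicIndependent K v := by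
    rw [algebraicIndependent_iff]
    intro p hp
    set g : Fin n → Fin m := fun i => ((e i : {x // x ∈ U}) : Fin m) with hgdef
    have h1 : rename g p ∈ P := by
      rw [← Ideal.Quotient.eq_zero_iff_mem]
      have h2 := comp_aeval_apply (Ideal.Quotient.mkₐ K P) p (f := fun i => X (g i))
      have h3 : aeval (fun i => X (g i)) p = rename g p := by rw [rename_eq_aeval]; rfl
      rw [h3] at h2
      have h4 : (Ideal.Quotient.mkₐ K P) (rename g p) = aeval v p := by
        rw [h2]; rfl
      rw [show Ideal.Quotient.mk P (rename g p) = (Ideal.Quotient.mkₐ K P) (rename g p) from rfl,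
        h4, hp]
    have h2 : rename g p ∈ supported K (↑U : Set (Fin m)) := by
      rw [supported_eq_range_rename]
      refine ⟨rename (fun i => (e i : {x // x ∈ U})) p, ?_⟩
      show rename Subtype.val (rename (fun i => (e i : {x // x ∈ U})) p) = rename g p
      rw [rename_rename]
      rfl
    have h3 : rename g p = 0 := by
      by_contra h
      exact Set.disjoint_left.mp hPdisj h1 ⟨h2, h⟩
    have hginj : Function.Injective g := by
      intro i j hij
      exact (e.injective (Subtype.ext hij))
    exact rename_injective g hginj (by simpa using h3)
  obtain ⟨c, hc⟩ := exists_ltSeries_of_algebraicIndependent n K D v hv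
  have h1 : ((n : ℕ∞) : WithBot ℕ∞) ≤ ringKrullDim D := by
    have h2 := Order.LTSeries.length_le_krullDim c
    rw [hc] at h2
    exact_mod_cast h2
  refine h1.trans ?_
  refine ringKrullDim_le_of_surjective (Ideal.Quotient.factor hIP) ?_
  intro x
  obtain ⟨y, rfl⟩ := Ideal.Quotient.mk_surjective x
  exact ⟨Ideal.Quotient.mk I y, Ideal.Quotient.factor_mk hIP y⟩
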